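/- For β > 0, ψ_β(-1) = Σ_{j=0}^∞ (-1)^j/(j!(1 + jβ)), and the function μ(β) := Σ_{j=0}^∞ (-1)^j/(j!(1 + jβ)) - 1/3 satisfies μ(β) > 0 for all β > 0 (indeed μ(β) ≥ 1/e - 1/3, with limits 1/e - 1/3 as β → 0⁺ and 2/3 as β → ∞). -/

import Mathlib

open Real Filter Topology intervalIntegral MeasureTheory Set

lemma hasSum_exp' (x : ℝ) : HasSum (fun n : ℕ => x ^ n / n.factorial) (Real.exp x) := by
  rw [Real.exp_eq_exp_ℝ]
  exact NormedSpace.expSeries_div_hasSum_exp x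

lemma summable_one_div_fact : Summable (fun n : ℕ => (1 : ℝ) / n.factorial) := by
  simpa using Real.summable_pow_div_factorial 1

lemma integrableOn_rpow_Ioc {c : ℝ} (hc : 0 < c) :
    IntegrableOn (fun t : ℝ => t ^ (c - 1)) (Ioc (0:ℝ) 1) := by
  rw [← intervalIntegrable_iff_integrableOn_Ioc_of_le zero_le_one]
  exact intervalIntegrable_rpow' (by linarith)

lemma key_integral {c : ℝ} (hc : 0 < c) :
    (∫ t in (0:ℝ)..1, Real.exp (-t) * t ^ (c - 1))
      = ∑' j : ℕ, (-1 : ℝ) ^ j / (j.factorial * (j + c)) := by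
  rw [intervalIntegral.integral_of_le zero_le_one]
  set S : ℕ → ℝ := fun j => (-1 : ℝ) ^ j / (j.factorial * (j + c)) with hS
  have hSsum : Summable S := by
    apply Summable.of_norm_bounded (g := fun j : ℕ => (1/c + 1) * (1 / j.factorial))
      (summable_one_div_fact.mul_left _)
    intro j
    have hjc : 0 < (j : ℝ) + c := by positivity
    have hfact : (0:ℝ) < (j.factorial : ℝ) := by exact_mod_cast j.factorial_pos
    have h1 : ‖S j‖ = 1 / ((j.factorial : ℝ) * (j + c)) := by
      rw [hS]
      rw [norm_div, norm_pow, norm_neg, norm_one, one_pow]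
      congr 1
      rw [Real.norm_eq_abs, abs_of_pos (by positivity)]
    rw [h1]
    have hbig : min c 1 ≤ (j:ℝ) + c := by
      rcases Nat.eq_zero_or_pos j with h | h
      · simp [h, min_le_left]
      · have : (1:ℝ) ≤ j := by exact_mod_cast h
        calc min c 1 ≤ 1 := min_le_right _ _
        _ ≤ (j:ℝ) + c := by linarith
    have hmin : 0 < min c 1 := by positivity
    have h2 : 1 / ((j.factorial : ℝ) * (j + c)) ≤ (1 / min c 1) * (1 / j.factorial) := by
      rw [div_mul_div_comm, one_mul]
      apply div_le_div_of_nonneg_left one_pos.le (by positivity)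
      calc min c 1 * (j.factorial : ℝ) ≤ ((j:ℝ) + c) * j.factorial := by
            apply mul_le_mul_of_nonneg_right hbig hfact.le
        _ = (j.factorial : ℝ) * (j + c) := by ring
    refine h2.trans ?_
    apply mul_le_mul_of_nonneg_right _ (by positivity)
    rcases le_total c 1 with h | h
    · rw [min_eq_left h]; linarith
    · rw [min_eq_right h]
      have : 0 < 1/c := by positivity
      linarith
  -- each term integrable and its integral
  have hterm_int : ∀ j : ℕ, IntegrableOn (fun t : ℝ => (-t) ^ j / j.factorial * t ^ (c - 1))
      (Ioc (0:ℝ) 1) := by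
    intro j
    apply Integrable.mono ((integrableOn_rpow_Ioc hc).const_mul (1 / j.factorial))
    · apply AEStronglyMeasurable.mul
      · exact ((continuous_neg.pow j).div_const _).aestronglyMeasurable
      · exact (Measurable.aestronglyMeasurable (by fun_prop)).restrict
    · filter_upwards [ae_restrict_mem measurableSet_Ioc] with t ht
      have ht0 : 0 < t := ht.1
      have ht1 : t ≤ 1 := ht.2
      have hfact : (1:ℝ) ≤ (j.factorial : ℝ) := by exact_mod_cast j.factorial_pos
      rw [Real.norm_eq_abs, Real.norm_eq_abs, abs_mul, abs_div, abs_pow, abs_neg]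
      rw [abs_of_pos ht0, abs_of_pos (Real.rpow_pos_of_pos ht0 _)]
      rw [abs_of_pos (by positivity : (0:ℝ) < 1 / j.factorial * t ^ (c-1))]
      have h1 : t ^ j ≤ 1 := pow_le_one₀ ht0.le ht1
      have h2 : |(j.factorial : ℝ)| = (j.factorial : ℝ) := abs_of_pos (by linarith)
      rw [h2]
      calc t ^ j / (j.factorial : ℝ) * t ^ (c-1)
          ≤ 1 / (j.factorial : ℝ) * t ^ (c-1) := by
            apply mul_le_mul_of_nonneg_right _ (Real.rpow_pos_of_pos ht0 _).le
            apply div_le_div_of_nonneg_right h1 (by linarith)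
        _ = _ := by ring_nf
  have hterm_val : ∀ j : ℕ, (∫ t in Ioc (0:ℝ) 1, (-t) ^ j / j.factorial * t ^ (c - 1)) = S j := by
    intro j
    have hjc : (0:ℝ) < (j:ℝ) + c := by positivity
    have heq : ∀ t ∈ Ioc (0:ℝ) 1, (-t) ^ j / j.factorial * t ^ (c - 1)
        = (-1:ℝ) ^ j / j.factorial * t ^ ((j:ℝ) + c - 1) := by
      intro t ht
      have ht0 : 0 < t := ht.1
      have : (-t) ^ j = (-1:ℝ)^j * t ^ j := by rw [← neg_one_mul, mul_pow]
      rw [this]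
      have : t ^ ((j:ℝ) + c - 1) = t ^ (j:ℝ) * t ^ (c - 1) := by
        rw [← Real.rpow_add ht0]; ring_nf
      rw [this, Real.rpow_natCast]
      ring
    rw [setIntegral_congr_fun measurableSet_Ioc heq]
    rw [MeasureTheory.integral_const_mul]
    rw [← intervalIntegral.integral_of_le zero_le_one]
    rw [integral_rpow (Or.inl (by linarith))]
    have he : (j:ℝ) + c - 1 + 1 = (j:ℝ) + c := by ring
    rw [he, Real.zero_rpow hjc.ne', Real.one_rpow, sub_zero, hS]
    field_simp
  -- partial sums converge by dominated convergence
  have hpt : ∀ t ∈ Ioc (0:ℝ) 1, Tendsto (fun N => ∑ j ∈ Finset.range N,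
      ((-t) ^ j / j.factorial * t ^ (c - 1))) atTop (𝓝 (Real.exp (-t) * t ^ (c - 1))) := by
    intro t _
    simpa [← Finset.sum_mul] using
      (Tendsto.mul_const (t ^ (c-1)) (hasSum_exp' (-t)).tendsto_sum_nat)
  have hbound : ∀ N : ℕ, ∀ t ∈ Ioc (0:ℝ) 1, ‖∑ j ∈ Finset.range N,
      ((-t) ^ j / j.factorial * t ^ (c - 1))‖ ≤ Real.exp 1 * t ^ (c - 1) := by
    intro N t ht
    have ht0 : 0 < t := ht.1
    have ht1 : t ≤ 1 := ht.2
    have hrp : (0:ℝ) < t ^ (c-1) := Real.rpow_pos_of_pos ht0 _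
    calc ‖∑ j ∈ Finset.range N, ((-t) ^ j / j.factorial * t ^ (c - 1))‖
        ≤ ∑ j ∈ Finset.range N, ‖(-t) ^ j / j.factorial * t ^ (c - 1)‖ :=
          norm_sum_le _ _
      _ = (∑ j ∈ Finset.range N, t ^ j / j.factorial) * t ^ (c-1) := by
          rw [Finset.sum_mul]
          apply Finset.sum_congr rfl
          intro j _
          rw [Real.norm_eq_abs, abs_mul, abs_div, abs_pow, abs_neg, abs_of_pos ht0,
            abs_of_pos hrp, Nat.abs_cast]
      _ ≤ Real.exp t * t ^ (c-1) := by
          apply mul_le_mul_of_nonneg_right _ hrp.le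
          exact ((hasSum_exp' t).summable.sum_le_tsum (Finset.range N) (fun j _ => by positivity)).trans_eq (hasSum_exp' t).tsum_eq
      _ ≤ Real.exp 1 * t ^ (c-1) := by
          apply mul_le_mul_of_nonneg_right (Real.exp_le_exp.2 ht1) hrp.le
  have hDCT : Tendsto (fun N => ∫ t in Ioc (0:ℝ) 1,
      ∑ j ∈ Finset.range N, ((-t) ^ j / j.factorial * t ^ (c - 1))) atTop
      (𝓝 (∫ t in Ioc (0:ℝ) 1, Real.exp (-t) * t ^ (c - 1))) := by
    apply MeasureTheory.tendsto_integral_of_dominated_convergence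
      (fun t => Real.exp 1 * t ^ (c - 1))
    · intro N
      exact (Finset.aestronglyMeasurable_fun_sum (Finset.range N)
        (fun j _ => (hterm_int j).aestronglyMeasurable))
    · exact (integrableOn_rpow_Ioc hc).const_mul _
    · intro N
      filter_upwards [ae_restrict_mem measurableSet_Ioc] with t ht
      exact hbound N t ht
    · filter_upwards [ae_restrict_mem measurableSet_Ioc] with t ht
      exact hpt t ht
  have hsum_eq : ∀ N : ℕ, (∫ t in Ioc (0:ℝ) 1,
      ∑ j ∈ Finset.range N, ((-t) ^ j / j.factorial * t ^ (c - 1)))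
      = ∑ j ∈ Finset.range N, S j := by
    intro N
    rw [MeasureTheory.integral_finset_sum _ (fun j _ => hterm_int j)]
    exact Finset.sum_congr rfl (fun j _ => hterm_val j)
  rw [show (fun N => ∫ t in Ioc (0:ℝ) 1,
      ∑ j ∈ Finset.range N, ((-t) ^ j / j.factorial * t ^ (c - 1)))
      = fun N => ∑ j ∈ Finset.range N, S j from funext hsum_eq] at hDCT
  exact tendsto_nhds_unique hDCT hSsum.hasSum.tendsto_sum_nat

lemma series_rep {β : ℝ} (hβ : 0 < β) :
    (1 / β) * ∫ t in (0:ℝ)..1, Real.exp (-t) * t ^ (1 / β - 1)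
      = ∑' j : ℕ, (-1 : ℝ) ^ j / (j.factorial * (1 + j * β)) := by
  have hc : 0 < 1/β := by positivity
  rw [key_integral hc, ← tsum_mul_left]
  apply tsum_congr
  intro j
  have hfact : (0:ℝ) < j.factorial := by exact_mod_cast j.factorial_pos
  have h1 : (0:ℝ) < 1 + j * β := by positivity
  have h2 : (0:ℝ) < (j:ℝ) + 1/β := by positivity
  rw [one_div, inv_mul_eq_div, div_div]
  congr 1
  have hb : ((j:ℝ) + β⁻¹) * β = 1 + j*β := by
    rw [add_mul, inv_mul_cancel₀ hβ.ne']; ring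
  rw [mul_assoc, hb]

lemma lower_bound {β : ℝ} (hβ : 0 < β) :
    Real.exp (-1) ≤ ∑' j : ℕ, (-1 : ℝ) ^ j / (j.factorial * (1 + j * β)) := by
  rw [← series_rep hβ]
  have hc : 0 < 1/β := by positivity
  have hint1 : IntegrableOn (fun t : ℝ => Real.exp (-1) * t ^ (1/β - 1)) (Ioc (0:ℝ) 1) :=
    (integrableOn_rpow_Ioc hc).const_mul _
  have hint2 : IntegrableOn (fun t : ℝ => Real.exp (-t) * t ^ (1/β - 1)) (Ioc (0:ℝ) 1) := by
    apply Integrable.mono (integrableOn_rpow_Ioc hc)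
    · exact AEStronglyMeasurable.mul
        (Real.continuous_exp.comp continuous_neg).aestronglyMeasurable
        (Measurable.aestronglyMeasurable (by fun_prop)).restrict
    · filter_upwards [ae_restrict_mem measurableSet_Ioc] with t ht
      have ht0 : 0 < t := ht.1
      have hrp : 0 < t ^ (1/β - 1) := Real.rpow_pos_of_pos ht0 _
      have hexp : Real.exp (-t) ≤ 1 := by
        rw [show (1:ℝ) = Real.exp 0 from (Real.exp_zero).symm]
        exact Real.exp_le_exp.2 (by linarith)
      rw [Real.norm_eq_abs, Real.norm_eq_abs, abs_mul, abs_of_pos (Real.exp_pos _),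
        abs_of_pos hrp]
      nlinarith [Real.exp_pos (-t)]
  have hmono : (∫ t in Ioc (0:ℝ) 1, Real.exp (-1) * t ^ (1/β-1))
      ≤ ∫ t in Ioc (0:ℝ) 1, Real.exp (-t) * t ^ (1/β-1) := by
    apply setIntegral_mono_on hint1 hint2 measurableSet_Ioc
    intro t ht
    have h : Real.exp (-1) ≤ Real.exp (-t) := Real.exp_le_exp.2 (by linarith [ht.2])
    exact mul_le_mul_of_nonneg_right h (Real.rpow_pos_of_pos ht.1 _).le
  have hval : (∫ t in Ioc (0:ℝ) 1, Real.exp (-1) * t ^ (1/β-1)) = Real.exp (-1) * β := by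
    rw [MeasureTheory.integral_const_mul, ← intervalIntegral.integral_of_le zero_le_one,
      integral_rpow (Or.inl (by linarith))]
    have he : 1/β - 1 + 1 = 1/β := by ring
    rw [he, Real.zero_rpow hc.ne', Real.one_rpow, sub_zero]
    field_simp
  rw [intervalIntegral.integral_of_le zero_le_one]
  calc Real.exp (-1) = (1/β) * (Real.exp (-1) * β) := by field_simp
    _ ≤ (1/β) * ∫ t in Ioc (0:ℝ) 1, Real.exp (-t) * t ^ (1/β-1) := by
        apply mul_le_mul_of_nonneg_left _ hc.le
        rw [← hval]; exact hmono

lemma lim_zero : Tendsto (fun β : ℝ => ∑' j : ℕ, (-1:ℝ)^j / (j.factorial * (1 + j*β)))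
    (nhdsWithin 0 (Set.Ioi 0)) (𝓝 (Real.exp (-1))) := by
  rw [show Real.exp (-1) = ∑' j : ℕ, (-1:ℝ)^j / j.factorial from
    ((hasSum_exp' (-1)).tsum_eq).symm]
  apply tendsto_tsum_of_dominated_convergence summable_one_div_fact
  · intro j
    have hfact : (0:ℝ) < j.factorial := by exact_mod_cast j.factorial_pos
    have h : Tendsto (fun β : ℝ => (-1:ℝ)^j / (j.factorial * (1 + j*β))) (𝓝 0)
        (𝓝 ((-1:ℝ)^j / (j.factorial * (1 + j*(0:ℝ))))) := by
      apply Tendsto.div tendsto_const_nhds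
      · exact (Continuous.tendsto (by fun_prop) 0)
      · simp [hfact.ne']
    simpa using h.mono_left nhdsWithin_le_nhds
  · filter_upwards [self_mem_nhdsWithin] with β hβ
    intro j
    have hβ0 : (0:ℝ) < β := hβ
    have hfact : (0:ℝ) < j.factorial := by exact_mod_cast j.factorial_pos
    have h1 : (0:ℝ) < 1 + j * β := by positivity
    rw [norm_div, norm_pow, norm_neg, norm_one, one_pow, Real.norm_eq_abs,
      abs_of_pos (by positivity : (0:ℝ) < (j.factorial:ℝ) * (1 + j*β))]
    rw [div_le_div_iff₀ (by positivity) hfact]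
    nlinarith [mul_nonneg hfact.le (mul_nonneg (Nat.cast_nonneg j) hβ0.le)]

lemma lim_top : Tendsto (fun β : ℝ => ∑' j : ℕ, (-1:ℝ)^j / (j.factorial * (1 + j*β)))
    atTop (𝓝 1) := by
  have hab : ∀ j : ℕ, Tendsto (fun β : ℝ => (-1:ℝ)^j / (j.factorial * (1 + j*β))) atTop
      (𝓝 (if j = 0 then (1:ℝ) else 0)) := by
    intro j
    rcases Nat.eq_zero_or_pos j with h | h
    · subst h; simpa using tendsto_const_nhds
    · have hjpos : (0:ℝ) < j := by exact_mod_cast h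
      have hfact : (0:ℝ) < j.factorial := by exact_mod_cast j.factorial_pos
      have hden : Tendsto (fun β : ℝ => (j.factorial:ℝ) * (1 + j*β)) atTop atTop := by
        apply Tendsto.const_mul_atTop hfact
        apply tendsto_atTop_add_const_left
        exact Tendsto.const_mul_atTop hjpos tendsto_id
      have := Tendsto.div_atTop (tendsto_const_nhds :
        Tendsto (fun _ : ℝ => (-1:ℝ)^j) atTop (𝓝 ((-1:ℝ)^j))) hden
      simpa [h.ne'] using this
  have hb : ∀ᶠ β : ℝ in atTop, ∀ j : ℕ,
      ‖(-1:ℝ)^j / (j.factorial * (1 + j*β))‖ ≤ 1 / j.factorial := by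
    filter_upwards [eventually_gt_atTop (0:ℝ)] with β hβ
    intro j
    have hfact : (0:ℝ) < j.factorial := by exact_mod_cast j.factorial_pos
    have h1 : (0:ℝ) < 1 + j * β := by positivity
    rw [norm_div, norm_pow, norm_neg, norm_one, one_pow, Real.norm_eq_abs,
      abs_of_pos (by positivity : (0:ℝ) < (j.factorial:ℝ) * (1 + j*β))]
    rw [div_le_div_iff₀ (by positivity) hfact]
    nlinarith [mul_nonneg hfact.le (mul_nonneg (Nat.cast_nonneg j) hβ.le)]
  have h := tendsto_tsum_of_dominated_convergence summable_one_div_fact hab hb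
  simpa [tsum_ite_eq] using h

theorem mu_positive :
    (∀ β : ℝ, 0 < β →
      (1 / β) * ∫ t in (0:ℝ)..1, Real.exp (-t) * t ^ (1 / β - 1)
        = ∑' j : ℕ, (-1 : ℝ) ^ j / (j.factorial * (1 + j * β))) ∧
    (∀ β : ℝ, 0 < β →
      0 < (∑' j : ℕ, (-1 : ℝ) ^ j / (j.factorial * (1 + j * β))) - 1 / 3 ∧
      Real.exp (-1) - 1 / 3 ≤
        (∑' j : ℕ, (-1 : ℝ) ^ j / (j.factorial * (1 + j * β))) - 1 / 3) ∧
    Filter.Tendsto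
      (fun β : ℝ => (∑' j : ℕ, (-1 : ℝ) ^ j / (j.factorial * (1 + j * β))) - 1 / 3)
      (nhdsWithin 0 (Set.Ioi 0)) (nhds (Real.exp (-1) - 1 / 3)) ∧
    Filter.Tendsto
      (fun β : ℝ => (∑' j : ℕ, (-1 : ℝ) ^ j / (j.factorial * (1 + j * β))) - 1 / 3)
      Filter.atTop (nhds (2 / 3)) := by
  have hexp13 : (1:ℝ)/3 < Real.exp (-1) := by
    rw [Real.exp_neg]
    have h1 := Real.exp_one_lt_d9
    have h2 := Real.exp_pos 1
    have h3 := mul_inv_cancel₀ h2.ne'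
    nlinarith
  refine ⟨fun β hβ => series_rep hβ, fun β hβ => ?_, lim_zero.sub_const _, ?_⟩
  · have := lower_bound hβ
    constructor <;> linarith
  · convert lim_top.sub_const (1/3 : ℝ) using 2
    norm_num
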